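/- arXiv:1904.03263 — 2 statements merged into one kernel-verified Lean document; each statement's English description precedes it below -/
import Mathlib

section
/- Let M be a square joint probability matrix on a finite type α, let H*con = max(H_M(Y|X), H_M(X|Y)), and let M̄ = (M + Mᵀ)/2 be its symmetrized matrix. Then the conditional entropies of M̄ satisfy H_{M̄}(Y|X) = H_{M̄}(X|Y) ≤ H*con + 1. (Theorem: the conditional entropy of the symmetrized matrix cannot exceed the maximal conditional entropy of M by more than one bit.) -/
/-- A probability vector on a finite type: nonnegative entries summing to 1. -/
def IsProbVec {α : Type*} [Fintype α] (p : α → ℝ) : Prop :=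
  (∀ a, 0 ≤ p a) ∧ ∑ a, p a = 1

/-- Binary Shannon entropy of a (probability) vector. -/
noncomputable def binH {α : Type*} [Fintype α] (p : α → ℝ) : ℝ :=
  (∑ a, Real.negMulLog (p a)) / Real.log 2
/-- A joint probability matrix on finite types α and β. -/
def IsJointProbMat {α β : Type*} [Fintype α] [Fintype β] (M : α → β → ℝ) : Prop :=
  (∀ a b, 0 ≤ M a b) ∧ ∑ a, ∑ b, M a b = 1

/-- Binary joint entropy of a joint probability matrix, viewed as a vector on α × β. -/
noncomputable def jointH {α β : Type*} [Fintype α] [Fintype β] (M : α → β → ℝ) : ℝ :=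
  binH (fun ab : α × β => M ab.1 ab.2)

/-- Row marginal of a joint probability matrix. -/
noncomputable def rowMarg {α β : Type*} [Fintype α] [Fintype β] (M : α → β → ℝ) : α → ℝ :=
  fun a => ∑ b, M a b

/-- Column marginal of a joint probability matrix. -/
noncomputable def colMarg {α β : Type*} [Fintype α] [Fintype β] (M : α → β → ℝ) : β → ℝ :=
  fun b => ∑ a, M a b

/-- Binary conditional entropy H_M(Y|X) = H(M) - H(rowMarg M). -/
noncomputable def condHYX {α β : Type*} [Fintype α] [Fintype β] (M : α → β → ℝ) : ℝ :=
  jointH M - binH (rowMarg M)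

/-- Binary conditional entropy H_M(X|Y) = H(M) - H(colMarg M). -/
noncomputable def condHXY {α β : Type*} [Fintype α] [Fintype β] (M : α → β → ℝ) : ℝ :=
  jointH M - binH (colMarg M)

/-- Symmetrized matrix (M + Mᵀ)/2 of a square joint probability matrix. -/
noncomputable def symmetrize {α : Type*} [Fintype α] (M : α → α → ℝ) : α → α → ℝ :=
  fun a b => (M a b + M b a) / 2

private lemma nml_half (a : ℝ) :
    Real.negMulLog (a / 2) = Real.negMulLog a / 2 + a * Real.log 2 / 2 := by
  rcases eq_or_ne a 0 with h | h
  · simp [h]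
  · unfold Real.negMulLog
    rw [Real.log_div h two_ne_zero]
    ring

private lemma nml_add_le {x y : ℝ} (hx : 0 ≤ x) (hy : 0 ≤ y) :
    Real.negMulLog (x + y) ≤ Real.negMulLog x + Real.negMulLog y := by
  have key : ∀ u v : ℝ, 0 ≤ u → 0 ≤ v → -(u * Real.log (u + v)) ≤ Real.negMulLog u := by
    intro u v hu hv
    rcases hu.eq_or_lt with h | h
    · simp [← h]
    · have hlog : Real.log u ≤ Real.log (u + v) := Real.log_le_log h (by linarith)
      have := mul_le_mul_of_nonneg_left hlog hu
      unfold Real.negMulLog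
      nlinarith
  have h1 := key x y hx hy
  have h2 := key y x hy hx
  rw [add_comm y x] at h2
  unfold Real.negMulLog at *
  nlinarith [h1, h2]

private lemma nml_mid {x y : ℝ} (hx : 0 ≤ x) (hy : 0 ≤ y) :
    (Real.negMulLog x + Real.negMulLog y) / 2 ≤ Real.negMulLog ((x + y) / 2) := by
  have h := Real.concaveOn_negMulLog.2 (Set.mem_Ici.2 hx) (Set.mem_Ici.2 hy)
      (by norm_num : (0:ℝ) ≤ 1/2) (by norm_num : (0:ℝ) ≤ 1/2) (by norm_num)
  simp only [smul_eq_mul] at h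
  have e : (1/2 : ℝ) * x + (1/2) * y = (x + y) / 2 := by ring
  rw [e] at h
  linarith

/-- Symmetrization theorem: the (equal) conditional entropies of the symmetrized matrix
exceed the maximal conditional entropy of `M` by at most one bit. -/
theorem symmetrize_condEntropy_le {α : Type*} [Fintype α] (M : α → α → ℝ)
    (hM : IsJointProbMat M) :
    condHYX (symmetrize M) = condHXY (symmetrize M) ∧
    condHYX (symmetrize M) ≤ max (condHYX M) (condHXY M) + 1 := by
  obtain ⟨hpos, hsum⟩ := hM
  have hlog2 : 0 < Real.log 2 := Real.log_pos (by norm_num)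
  have hne : Real.log 2 ≠ 0 := hlog2.ne'
  -- marginals of symmetrize are equal
  have hrc : rowMarg (symmetrize M) = colMarg (symmetrize M) := by
    funext a
    simp only [rowMarg, colMarg, symmetrize]
    exact Finset.sum_congr rfl fun b _ => by ring
  have heqcond : condHYX (symmetrize M) = condHXY (symmetrize M) := by
    unfold condHYX condHXY; rw [hrc]
  refine ⟨heqcond, ?_⟩
  -- notation for sums
  set S := ∑ a, ∑ b, Real.negMulLog (M a b) with hS
  set R := ∑ a, Real.negMulLog (rowMarg M a) with hRdef
  set C := ∑ a, Real.negMulLog (colMarg M a) with hCdef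
  set JS := ∑ a, ∑ b, Real.negMulLog (symmetrize M a b) with hJS
  set RS := ∑ a, Real.negMulLog (rowMarg (symmetrize M) a) with hRS
  have hswapS : ∑ a, ∑ b, Real.negMulLog (M b a) = S := by rw [hS]; exact Finset.sum_comm
  have hswap1 : ∑ a, ∑ b, M b a = 1 := by rw [← hsum]; exact Finset.sum_comm
  -- joint entropy expressions
  have hjm : jointH M = S / Real.log 2 := by
    unfold jointH binH; rw [Fintype.sum_prod_type]
  have hjs : jointH (symmetrize M) = JS / Real.log 2 := by
    unfold jointH binH; rw [Fintype.sum_prod_type]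
  -- bound on JS
  have hJle : JS ≤ S + Real.log 2 := by
    have hle : JS ≤ ∑ a, ∑ b, (Real.negMulLog (M a b) / 2 + Real.negMulLog (M b a) / 2
        + M a b * (Real.log 2 / 2) + M b a * (Real.log 2 / 2)) := by
      rw [hJS]
      refine Finset.sum_le_sum fun a _ => Finset.sum_le_sum fun b _ => ?_
      show Real.negMulLog ((M a b + M b a) / 2) ≤ _
      rw [nml_half]
      have := nml_add_le (hpos a b) (hpos b a)
      linarith
    have heq : ∑ a, ∑ b, (Real.negMulLog (M a b) / 2 + Real.negMulLog (M b a) / 2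
        + M a b * (Real.log 2 / 2) + M b a * (Real.log 2 / 2)) = S + Real.log 2 := by
      simp only [Finset.sum_add_distrib, ← Finset.sum_div, ← Finset.sum_mul]
      rw [hswapS, hswap1, hsum, ← hS]
      ring
    linarith
  -- bound on RS
  have hrpos : ∀ a, 0 ≤ rowMarg M a := fun a => Finset.sum_nonneg fun b _ => hpos a b
  have hcpos : ∀ a, 0 ≤ colMarg M a := fun a => Finset.sum_nonneg fun b _ => hpos b a
  have hrowsym : ∀ a, rowMarg (symmetrize M) a = (rowMarg M a + colMarg M a) / 2 := by
    intro a
    simp only [rowMarg, colMarg, symmetrize]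
    rw [← Finset.sum_div, Finset.sum_add_distrib]
  have hRle : (R + C) / 2 ≤ RS := by
    have hle : ∑ a, (Real.negMulLog (rowMarg M a) + Real.negMulLog (colMarg M a)) / 2 ≤ RS := by
      rw [hRS]
      refine Finset.sum_le_sum fun a _ => ?_
      rw [hrowsym a]
      exact nml_mid (hrpos a) (hcpos a)
    have heq : ∑ a, (Real.negMulLog (rowMarg M a) + Real.negMulLog (colMarg M a)) / 2
        = (R + C) / 2 := by
      rw [← Finset.sum_div, Finset.sum_add_distrib, ← hRdef, ← hCdef]
    linarith
  -- assemble
  have hA : condHYX M = S / Real.log 2 - R / Real.log 2 := by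
    unfold condHYX binH; rw [hjm, ← hRdef]
  have hB : condHXY M = S / Real.log 2 - C / Real.log 2 := by
    unfold condHXY binH; rw [hjm, ← hCdef]
  have hCsym : condHYX (symmetrize M) = JS / Real.log 2 - RS / Real.log 2 := by
    unfold condHYX binH; rw [hjs, ← hRS]
  have havg : (condHYX M + condHXY M) / 2 ≤ max (condHYX M) (condHXY M) := by
    have := le_max_left (condHYX M) (condHXY M)
    have := le_max_right (condHYX M) (condHXY M)
    linarith
  have hmain : condHYX (symmetrize M) ≤ (condHYX M + condHXY M) / 2 + 1 := by
    rw [hCsym, hA, hB]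
    have h1 : (JS - RS) / Real.log 2 ≤ (S + Real.log 2 - (R + C) / 2) / Real.log 2 :=
      (div_le_div_iff_of_pos_right hlog2).mpr (by linarith)
    have h2 : (JS - RS) / Real.log 2 = JS / Real.log 2 - RS / Real.log 2 := by ring
    have h3 : (S + Real.log 2 - (R + C) / 2) / Real.log 2
        = (S / Real.log 2 - R / Real.log 2 + (S / Real.log 2 - C / Real.log 2)) / 2 + 1 := by
      field_simp
      ring
    linarith
  linarith
end

section
/- Let M be a square joint probability matrix on a finite type α and let M̄ = (M + Mᵀ)/2 be its symmetrized matrix. Then the binary joint entropy of M̄ satisfies H(M) ≤ H(M̄) ≤ H(M) + 1, i.e., symmetrizing can only increase the joint entropy, and by at most one bit. -/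
lemma negMulLog_avg_ge (x y : ℝ) (hx : 0 ≤ x) (hy : 0 ≤ y) :
    (Real.negMulLog x + Real.negMulLog y) / 2 ≤ Real.negMulLog ((x + y) / 2) := by
  have h := Real.strictConcaveOn_negMulLog.concaveOn.2 (Set.mem_Ici.mpr hx)
    (Set.mem_Ici.mpr hy) (by norm_num : (0:ℝ) ≤ 1/2) (by norm_num : (0:ℝ) ≤ 1/2) (by norm_num)
  simp only [smul_eq_mul] at h
  have : (1/2 : ℝ) * x + (1/2) * y = (x + y) / 2 := by ring
  rw [this] at h
  linarith

lemma negMulLog_avg_le (x y : ℝ) (hx : 0 ≤ x) (hy : 0 ≤ y) :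
    Real.negMulLog ((x + y) / 2) ≤
      (Real.negMulLog x + Real.negMulLog y) / 2 + ((x + y) / 2) * Real.log 2 := by
  have key : ∀ z : ℝ, 0 ≤ z → z ≤ x + y →
      -(z/2) * Real.log ((x+y)/2) ≤ Real.negMulLog z / 2 + (z/2) * Real.log 2 := by
    intro z hz hzle
    rcases eq_or_lt_of_le hz with h0 | h0
    · simp [← h0, Real.negMulLog]
    · have hlog : Real.log (z/2) ≤ Real.log ((x+y)/2) :=
        Real.log_le_log (by linarith) (by linarith)
      have hlz : Real.log (z/2) = Real.log z - Real.log 2 := by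
        rw [Real.log_div (ne_of_gt h0) (by norm_num)]
      have h2 : -(z/2) * Real.log ((x+y)/2) ≤ -(z/2) * Real.log (z/2) := by
        have := mul_le_mul_of_nonneg_left (neg_le_neg hlog) (by linarith : (0:ℝ) ≤ z/2)
        linarith [this]
      rw [hlz] at h2
      simp only [Real.negMulLog]
      nlinarith [h2]
  have hkx := key x hx (by linarith)
  have hky := key y hy (by linarith)
  have hq : Real.negMulLog ((x+y)/2) =
      -(x/2) * Real.log ((x+y)/2) + -(y/2) * Real.log ((x+y)/2) := by
    simp only [Real.negMulLog]; ring
  rw [hq]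
  linarith

/-- Symmetrizing a square joint probability matrix can only increase the joint entropy,
and by at most one bit. -/
theorem symmetrize_jointEntropy_bounds {α : Type*} [Fintype α] (M : α → α → ℝ)
    (hM : IsJointProbMat M) :
    jointH M ≤ jointH (symmetrize M) ∧ jointH (symmetrize M) ≤ jointH M + 1 := by
  obtain ⟨hpos, hsum⟩ := hM
  have hlog2 : (0:ℝ) < Real.log 2 := Real.log_pos (by norm_num)
  -- sums over the product type
  set S : ℝ := ∑ ab : α × α, Real.negMulLog (M ab.1 ab.2) with hS
  set T : ℝ := ∑ ab : α × α, Real.negMulLog (symmetrize M ab.1 ab.2) with hT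
  have hswap : ∑ ab : α × α, Real.negMulLog (M ab.2 ab.1) = S := by
    rw [hS]
    rw [Fintype.sum_prod_type, Fintype.sum_prod_type]
    exact Finset.sum_comm
  have hsum' : ∑ ab : α × α, M ab.1 ab.2 = 1 := by
    rw [Fintype.sum_prod_type]; exact hsum
  have hlb : S ≤ T := by
    have : ∀ ab : α × α, (Real.negMulLog (M ab.1 ab.2) + Real.negMulLog (M ab.2 ab.1)) / 2
        ≤ Real.negMulLog (symmetrize M ab.1 ab.2) := fun ab =>
      negMulLog_avg_ge _ _ (hpos _ _) (hpos _ _)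
    have h1 : ∑ ab : α × α, (Real.negMulLog (M ab.1 ab.2) + Real.negMulLog (M ab.2 ab.1)) / 2
        ≤ T := Finset.sum_le_sum (fun ab _ => this ab)
    have h2 : ∑ ab : α × α, (Real.negMulLog (M ab.1 ab.2) + Real.negMulLog (M ab.2 ab.1)) / 2
        = S := by
      rw [← Finset.sum_div]
      rw [Finset.sum_add_distrib, hswap, ← hS]
      ring
    linarith
  have hub : T ≤ S + Real.log 2 := by
    have : ∀ ab : α × α, Real.negMulLog (symmetrize M ab.1 ab.2) ≤
        (Real.negMulLog (M ab.1 ab.2) + Real.negMulLog (M ab.2 ab.1)) / 2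
          + ((M ab.1 ab.2 + M ab.2 ab.1) / 2) * Real.log 2 := fun ab =>
      negMulLog_avg_le _ _ (hpos _ _) (hpos _ _)
    have h1 : T ≤ ∑ ab : α × α, ((Real.negMulLog (M ab.1 ab.2) + Real.negMulLog (M ab.2 ab.1)) / 2
          + ((M ab.1 ab.2 + M ab.2 ab.1) / 2) * Real.log 2) :=
      Finset.sum_le_sum (fun ab _ => this ab)
    have h2 : ∑ ab : α × α, ((Real.negMulLog (M ab.1 ab.2) + Real.negMulLog (M ab.2 ab.1)) / 2
          + ((M ab.1 ab.2 + M ab.2 ab.1) / 2) * Real.log 2) = S + Real.log 2 := by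
      rw [Finset.sum_add_distrib]
      have e1 : ∑ ab : α × α, (Real.negMulLog (M ab.1 ab.2) + Real.negMulLog (M ab.2 ab.1)) / 2
          = S := by
        rw [← Finset.sum_div, Finset.sum_add_distrib, hswap, ← hS]; ring
      have e2 : ∑ ab : α × α, ((M ab.1 ab.2 + M ab.2 ab.1) / 2) * Real.log 2
          = Real.log 2 := by
        rw [← Finset.sum_mul]
        have : ∑ ab : α × α, (M ab.1 ab.2 + M ab.2 ab.1) / 2 = 1 := by
          rw [← Finset.sum_div, Finset.sum_add_distrib, hsum']
          have : ∑ ab : α × α, M ab.2 ab.1 = 1 := by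
            rw [Fintype.sum_prod_type]
            rw [Finset.sum_comm]
            exact hsum
          rw [this]; ring
        rw [this, one_mul]
      rw [e1, e2]
    linarith
  have hJM : jointH M = S / Real.log 2 := rfl
  have hJT : jointH (symmetrize M) = T / Real.log 2 := rfl
  constructor
  · rw [hJM, hJT]
    exact div_le_div_of_nonneg_right hlb hlog2.le
  · rw [hJM, hJT]
    have : (S + Real.log 2) / Real.log 2 = S / Real.log 2 + 1 := by
      field_simp
    rw [← this]
    exact div_le_div_of_nonneg_right hub hlog2.le
end
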